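/- arXiv:1511.08123 — 4 statements merged into one kernel-verified Lean document; each statement's English description precedes it below -/
import Mathlib

section
/- If a reduced Gröbner basis of an ideal in K[x_1,...,x_n] has degree at most e (i.e., every element has total degree at most e), then it contains at most binomial(e+n-1, n-1) polynomials. -/
/-- A reduced Gröbner basis of degree at most `e` contains at most
`(e+n-1).choose (n-1)` polynomials: any set of monomials (exponent vectors)
in `n` variables, each of total degree at most `e`, that is an antichain
under divisibility, has cardinality at most `(e+n-1).choose (n-1)`. -/
theorem antichain_of_monomials_card_le (n e : ℕ)
    (S : Finset (Fin n →₀ ℕ))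
    (hdeg : ∀ m ∈ S, (m.sum fun _ a => a) ≤ e)
    (hantichain : ∀ m ∈ S, ∀ m' ∈ S, m ≠ m' → ¬ m ≤ m') :
    S.card ≤ (e + n - 1).choose (n - 1) := by
  rcases Nat.eq_zero_or_pos n with hn | hn
  · subst hn
    have : S.card ≤ 1 := Finset.card_le_one.mpr (fun a _ b _ => Subsingleton.elim a b)
    simpa using this
  · set i0 : Fin n := ⟨0, hn⟩
    have hcard : ∀ m ∈ S, (m.toMultiset + Multiset.replicate (e - m.sum fun _ a => a) i0).card = e := by
      intro m hm
      have := hdeg m hm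
      simp only [Multiset.card_add, Multiset.card_replicate, Finsupp.card_toMultiset]
      simp only [Finsupp.sum, id_eq] at this ⊢
      omega
    classical
    let f : {m // m ∈ S} → Sym (Fin n) e := fun m =>
      ⟨m.1.toMultiset + Multiset.replicate (e - m.1.sum fun _ a => a) i0, hcard m.1 m.2⟩
    have hinj : Function.Injective f := by
      rintro ⟨m, hm⟩ ⟨m', hm'⟩ h
      have heq : m.toMultiset + Multiset.replicate (e - m.sum fun _ a => a) i0
          = m'.toMultiset + Multiset.replicate (e - m'.sum fun _ a => a) i0 := by
        simpa [f, Sym.ext_iff] using congrArg Subtype.val h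
      have hcount : ∀ i : Fin n, m i + (if i0 = i then e - m.sum fun _ a => a else 0)
          = m' i + (if i0 = i then e - m'.sum fun _ a => a else 0) := by
        intro i
        have := congrArg (Multiset.count i) heq
        simpa [Multiset.count_replicate, Finsupp.count_toMultiset] using this
      have key : m ≤ m' ∨ m' ≤ m := by
        rcases le_total (e - m.sum fun _ a => a) (e - m'.sum fun _ a => a) with hle | hle
        · right
          intro i
          have := hcount i
          by_cases hi : i0 = i <;> simp [hi] at this <;> omega
        · left
          intro i
          have := hcount i
          by_cases hi : i0 = i <;> simp [hi] at this <;> omega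
      apply Subtype.ext
      by_contra hne
      rcases key with h1 | h1
      · exact hantichain m hm m' hm' hne h1
      · exact hantichain m' hm' m hm (Ne.symm hne) h1
    have h1 : S.card ≤ Fintype.card (Sym (Fin n) e) := by
      simpa [Fintype.card_coe] using Fintype.card_le_of_injective f hinj
    rw [Sym.card_sym_eq_choose] at h1
    simp only [Fintype.card_fin] at h1
    calc S.card ≤ (n + e - 1).choose e := h1
      _ = (e + n - 1).choose (n - 1) := by
          rw [add_comm n e]
          rw [← Nat.choose_symm (by omega : e ≤ e + n - 1)]
          congr 1
          omega
end

section
/- Let J be a homogeneous ideal in K[x_1,...,x_n] and let H be a universal Gröbner basis of J. Then the saturation exponent α of J with respect to the product x_1⋯x_n satisfies α ≤ deg H, where deg H is the maximal total degree of an element of H. -/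
open MvPolynomial

variable {n : ℕ} {K : Type*} [Field K]

/-- The leading exponent (multidegree) of a polynomial with respect to a
monomial order. -/
noncomputable def leadExp (m : MonomialOrder (Fin n)) (p : MvPolynomial (Fin n) K) :
    Fin n →₀ ℕ :=
  m.toSyn.symm (p.support.sup (⇑m.toSyn))

/-- `G` is a Gröbner basis of the ideal `I` with respect to the monomial order
`m`: it is a finite subset of `I` generating `I` such that the leading monomial
of every nonzero element of `I` is divisible by the leading monomial of some
nonzero element of `G`. -/
def IsGroebnerBasis (m : MonomialOrder (Fin n)) (I : Ideal (MvPolynomial (Fin n) K))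
    (G : Finset (MvPolynomial (Fin n) K)) : Prop :=
  ↑G ⊆ (I : Set (MvPolynomial (Fin n) K)) ∧ Ideal.span ↑G = I ∧
    ∀ f ∈ I, f ≠ 0 → ∃ g ∈ G, g ≠ 0 ∧ leadExp m g ≤ leadExp m f

-- Section A : leadExp basics
lemma leadExp_mem_support {m : MonomialOrder (Fin n)} {p : MvPolynomial (Fin n) K}
    (hp : p ≠ 0) : leadExp m p ∈ p.support := by
  obtain ⟨u, hu, h⟩ := Finset.exists_mem_eq_sup p.support
    (by simpa using hp) (⇑m.toSyn)
  rw [leadExp, h]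
  simpa using hu

lemma le_leadExp {m : MonomialOrder (Fin n)} {p : MvPolynomial (Fin n) K}
    {u : Fin n →₀ ℕ} (hu : u ∈ p.support) :
    m.toSyn u ≤ m.toSyn (leadExp m p) := by
  rw [leadExp, AddEquiv.apply_symm_apply]
  exact Finset.le_sup hu

-- Section B : X pow dvd
lemma xpow_dvd_iff {i : Fin n} {s : ℕ} {p : MvPolynomial (Fin n) K} :
    (X i : MvPolynomial (Fin n) K) ^ s ∣ p ↔ ∀ u ∈ p.support, s ≤ u i := by
  constructor
  · rintro ⟨q, rfl⟩ u hu
    rw [mem_support_iff, X_pow_eq_monomial, coeff_monomial_mul'] at hu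
    split at hu
    · next h => exact Finsupp.single_le_iff.mp h
    · exact absurd rfl hu
  · intro hs
    refine ⟨∑ u ∈ p.support, monomial (u - Finsupp.single i s) (coeff u p), ?_⟩
    rw [X_pow_eq_monomial, Finset.mul_sum]
    conv_lhs => rw [p.as_sum]
    refine Finset.sum_congr rfl fun u hu => ?_
    rw [monomial_mul, one_mul, add_tsub_cancel_of_le (Finsupp.single_le_iff.mpr (hs u hu))]
def auxW (i : Fin n) : (Fin n →₀ ℕ) →+ ℕ where
  toFun u := ∑ j ∈ Finset.univ.erase i, u j
  map_zero' := by simp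
  map_add' u v := by simp [Finset.sum_add_distrib]

lemma auxW_apply (i : Fin n) (u : Fin n →₀ ℕ) :
    auxW i u = ∑ j ∈ Finset.univ.erase i, u j := rfl

noncomputable def auxE (i : Fin n) : (Fin n →₀ ℕ) →+ ℕ ×ₗ Lex (Fin n →₀ ℕ) where
  toFun u := toLex (auxW i u, toLex u)
  map_zero' := by
    show toLex (auxW i 0, toLex 0) = 0
    rw [map_zero]
    rfl
  map_add' u v := by
    have : (auxW i (u + v), toLex (u + v)) = (auxW i u + auxW i v, toLex u + toLex v) := by
      rw [map_add]; rfl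
    exact congrArg toLex this

lemma auxE_inj (i : Fin n) : Function.Injective (auxE i) := by
  intro u v h
  have := congrArg (fun x => (ofLex x).2) h
  exact this

universe u

noncomputable def auxEU (i : Fin n) : ULift.{u} (Fin n →₀ ℕ) →+ ℕ ×ₗ Lex (Fin n →₀ ℕ) :=
  (auxE i).comp (AddEquiv.ulift : ULift (Fin n →₀ ℕ) ≃+ _).toAddMonoidHom

lemma auxEU_apply (i : Fin n) (x : ULift.{u} (Fin n →₀ ℕ)) :
    auxEU i x = auxE i x.down := rfl

lemma auxEU_inj (i : Fin n) : Function.Injective (auxEU.{u} i) :=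
  (auxE_inj i).comp (AddEquiv.ulift : ULift (Fin n →₀ ℕ) ≃+ _).injective

open Classical in
noncomputable def revLO (i : Fin n) : LinearOrder (ULift.{u} (Fin n →₀ ℕ)) :=
  LinearOrder.lift' (auxEU i) (auxEU_inj i)

noncomputable def revLocacm (i : Fin n) :
    @IsOrderedAddMonoid (ULift.{u} (Fin n →₀ ℕ)) _ (revLO i).toPartialOrder.toPreorder :=
  @IsOrderedAddMonoid.mk _ _ (revLO i).toPartialOrder.toPreorder
    (fun a b h c => by
      have h' : auxEU i a ≤ auxEU i b := h
      show auxEU i (a + c) ≤ auxEU i (b + c)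
      rw [map_add, map_add]
      exact add_le_add h' le_rfl)
    (fun a b h c => by
      have h' : auxEU i a ≤ auxEU i b := h
      show auxEU i (c + a) ≤ auxEU i (c + b)
      rw [map_add, map_add]
      exact add_le_add le_rfl h')

noncomputable def revOrder (i : Fin n) : MonomialOrder (Fin n) where
  syn := ULift.{u} (Fin n →₀ ℕ)
  linearOrderSyn := revLO i
  isOrderedAddMonoid_syn := revLocacm i
  toSyn := (AddEquiv.ulift : ULift (Fin n →₀ ℕ) ≃+ _).symm
  toSyn_monotone := by
    intro u v huv
    show auxEU.{u} i _ ≤ auxEU.{u} i _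
    rw [auxEU_apply, auxEU_apply]
    have hW : auxW i u ≤ auxW i v := by
      rw [auxW_apply, auxW_apply]
      exact Finset.sum_le_sum fun j _ => huv j
    rcases lt_or_eq_of_le hW with h | h
    · exact Prod.Lex.le_iff.mpr (Or.inl h)
    · exact Prod.Lex.le_iff.mpr (Or.inr ⟨h, Finsupp.toLex_monotone huv⟩)
  wellFoundedLT_syn := ⟨(show WellFounded (fun a b : ULift.{u} (Fin n →₀ ℕ) => auxEU i a < auxEU i b)
      from InvImage.wf _ wellFounded_lt)⟩

lemma revOrder_le_iff {i : Fin n} {u v : Fin n →₀ ℕ} :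
    (revOrder i).toSyn u ≤ (revOrder i).toSyn v ↔ auxE i u ≤ auxE i v := Iff.rfl

lemma degree_eq_sum_univ (u : Fin n →₀ ℕ) : u.degree = ∑ j, u j := by
  rw [Finsupp.degree]
  exact Finset.sum_subset (Finset.subset_univ _) (by
    intro x _ hx
    simpa using Finsupp.notMem_support_iff.mp hx)

lemma add_auxW (i : Fin n) (u : Fin n →₀ ℕ) : u i + auxW i u = u.degree := by
  rw [degree_eq_sum_univ, auxW_apply]
  exact Finset.add_sum_erase _ _ (Finset.mem_univ i)

lemma revOrder_min (i : Fin n) {u v : Fin n →₀ ℕ}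
    (h : (revOrder i).toSyn u ≤ (revOrder i).toSyn v) (hdeg : u.degree = v.degree) :
    v i ≤ u i := by
  rw [revOrder_le_iff] at h
  have hW : auxW i u ≤ auxW i v := by
    rcases Prod.Lex.le_iff.mp h with h | h
    · exact le_of_lt h
    · exact le_of_eq h.1
  have h1 := add_auxW i u
  have h2 := add_auxW i v
  omega

-- more helpers

lemma degree_add' (a b : Fin n →₀ ℕ) : (a + b).degree = a.degree + b.degree := by
  simp [degree_eq_sum_univ, Finset.sum_add_distrib]

lemma isHom_degree {p : MvPolynomial (Fin n) K} {d : ℕ} (hp : p.IsHomogeneous d)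
    {u : Fin n →₀ ℕ} (hu : u ∈ p.support) : u.degree = d := by
  have := hp (mem_support_iff.mp hu)
  rwa [Finsupp.degree_eq_weight_one]

lemma star (J : Ideal (MvPolynomial (Fin n) K))
    (hJhom : ∀ f ∈ J, ∀ d : ℕ, homogeneousComponent d f ∈ J)
    (H : Finset (MvPolynomial (Fin n) K))
    (hH : ∀ m : MonomialOrder (Fin n), IsGroebnerBasis m J H)
    (D : ℕ) (hD : D = H.sup totalDegree) (i : Fin n) (d : ℕ) :
    ∀ h, h ∈ J → h.IsHomogeneous d → (X i : MvPolynomial (Fin n) K) ^ (D + 1) ∣ h →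
      ∃ q ∈ J, h = X i * q := by
  set m := revOrder i with hm
  suffices key : ∀ b : m.syn, ∀ h, m.toSyn (leadExp m h) = b → h ∈ J → h.IsHomogeneous d →
      (X i : MvPolynomial (Fin n) K) ^ (D + 1) ∣ h → ∃ q ∈ J, h = X i * q by
    exact fun h hJ hhom hdvd => key _ h rfl hJ hhom hdvd
  intro b
  induction b using WellFoundedLT.induction with
  | _ b IH =>
  intro h hb hJmem hhom hdvd
  by_cases h0 : h = 0
  · exact ⟨0, J.zero_mem, by simp [h0]⟩
  obtain ⟨g, hgH, hg0, hle⟩ := (hH m).2.2 h hJmem h0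
  have hgJ : g ∈ J := (hH m).1 hgH
  set w := leadExp m g with hw
  have hwsupp : w ∈ g.support := leadExp_mem_support hg0
  set e := w.degree with he
  set g' := homogeneousComponent e g with hg'
  have hcoeffw : coeff w g' = coeff w g := by
    rw [hg', coeff_homogeneousComponent, if_pos rfl]
  have hwg' : w ∈ g'.support := by
    rw [mem_support_iff, hcoeffw, ← mem_support_iff]
    exact hwsupp
  have hg'0 : g' ≠ 0 := fun hc => by simp [hc] at hwg'
  have hsubsupp : g'.support ⊆ g.support := fun z hz => by
    rw [mem_support_iff, hg', coeff_homogeneousComponent] at hz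
    split at hz
    · exact mem_support_iff.mpr hz
    · exact absurd rfl hz
  have hleadg' : leadExp m g' = w := by
    apply m.toSyn.injective
    exact le_antisymm (le_leadExp (hsubsupp (leadExp_mem_support hg'0))) (le_leadExp hwg')
  have hg'J : g' ∈ J := hJhom g hgJ e
  have hg'hom : g'.IsHomogeneous e := homogeneousComponent_isHomogeneous e g
  have heD : e ≤ D := by
    have h1 : w.degree ≤ g.totalDegree := le_totalDegree hwsupp
    have h2 : g.totalDegree ≤ H.sup totalDegree := Finset.le_sup hgH
    omega
  set u := leadExp m h with hu
  have husupp : u ∈ h.support := leadExp_mem_support h0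
  have hudeg : u.degree = d := isHom_degree hhom husupp
  have huD : D + 1 ≤ u i := xpow_dvd_iff.mp hdvd u husupp
  have hwu : w ≤ u := hle
  have hwie : w i ≤ e := he ▸ Finsupp.le_degree i w
  have hwiu : w i ≤ u i := hwu i
  have hvi : 1 ≤ (u - w) i := by
    rw [Finsupp.tsub_apply]
    omega
  have hed : e ≤ d := by
    have := hwu
    calc e = w.degree := he
    _ ≤ u.degree := by
        rw [degree_eq_sum_univ, degree_eq_sum_univ]
        exact Finset.sum_le_sum fun j _ => hwu j
    _ = d := hudeg
  set c := coeff u h / coeff w g' with hc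
  set P := monomial (u - w) c * g' with hP
  have hcoeffuP : coeff u P = coeff u h := by
    rw [hP, coeff_monomial_mul', if_pos tsub_le_self, tsub_tsub_cancel_of_le hwu, hc,
      div_mul_cancel₀]
    rwa [← mem_support_iff]
  set h' := h - P with hh'
  have hcoeffu : coeff u h' = 0 := by
    rw [hh', coeff_sub, hcoeffuP, sub_self]
  have hPsupp : ∀ z ∈ P.support, ∃ y ∈ g'.support, z = (u - w) + y := fun z hz => by
    rw [mem_support_iff, hP, coeff_monomial_mul'] at hz
    split at hz
    · next hle' =>
      refine ⟨z - (u - w), ?_, (add_tsub_cancel_of_le hle').symm⟩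
      rw [mem_support_iff]
      exact fun hzero => hz (by rw [hzero, mul_zero])
    · exact absurd rfl hz
  have hsupb : ∀ z ∈ h'.support, m.toSyn z ≤ m.toSyn u := by
    intro z hz
    have : z ∈ h.support ∨ z ∈ P.support := by
      by_contra hcon
      push_neg at hcon
      rw [mem_support_iff, hh', coeff_sub, notMem_support_iff.mp hcon.1,
        notMem_support_iff.mp hcon.2, sub_self] at hz
      exact hz rfl
    rcases this with hzh | hzP
    · exact le_leadExp hzh
    · obtain ⟨y, hy, rfl⟩ := hPsupp _ hzP
      have h1 : m.toSyn y ≤ m.toSyn w := hleadg' ▸ le_leadExp hy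
      calc m.toSyn ((u - w) + y) = m.toSyn (u - w) + m.toSyn y := map_add _ _ _
      _ ≤ m.toSyn (u - w) + m.toSyn w := add_le_add le_rfl h1
      _ = m.toSyn ((u - w) + w) := (map_add _ _ _).symm
      _ = m.toSyn u := by rw [tsub_add_cancel_of_le hwu]
  have hdvd' : (X i : MvPolynomial (Fin n) K) ^ (D + 1) ∣ h' := by
    rw [xpow_dvd_iff]
    intro z hz
    have : z ∈ h.support ∨ z ∈ P.support := by
      by_contra hcon
      push_neg at hcon
      rw [mem_support_iff, hh', coeff_sub, notMem_support_iff.mp hcon.1,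
        notMem_support_iff.mp hcon.2, sub_self] at hz
      exact hz rfl
    rcases this with hzh | hzP
    · exact xpow_dvd_iff.mp hdvd z hzh
    · obtain ⟨y, hy, rfl⟩ := hPsupp _ hzP
      have h1 : m.toSyn y ≤ m.toSyn w := hleadg' ▸ le_leadExp hy
      have h2 : w i ≤ y i := by
        apply revOrder_min i h1
        rw [isHom_degree hg'hom hy, he]
      rw [Finsupp.add_apply, Finsupp.tsub_apply]
      omega
  have hhom' : h'.IsHomogeneous d := by
    have hmon : (monomial (u - w) c).IsHomogeneous (u - w).degree :=
      isHomogeneous_monomial c rfl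
    have hPhom : P.IsHomogeneous ((u - w).degree + e) := hmon.mul hg'hom
    have hdeg : (u - w).degree + e = d := by
      have := degree_add' (u - w) w
      rw [tsub_add_cancel_of_le hwu, hudeg] at this
      omega
    exact hhom.sub (hdeg ▸ hPhom)
  have hXP : X i * monomial ((u - w) - Finsupp.single i 1) c = monomial (u - w) c := by
    rw [X, monomial_mul, one_mul, add_tsub_cancel_of_le (Finsupp.single_le_iff.mpr hvi)]
  have hPJ : P ∈ J := J.mul_mem_left _ hg'J
  by_cases h'0 : h' = 0
  · refine ⟨monomial ((u - w) - Finsupp.single i 1) c * g', J.mul_mem_left _ hg'J, ?_⟩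
    have : h = P := by rwa [hh', sub_eq_zero] at h'0
    rw [this, hP, ← hXP, mul_assoc]
  · have hlt : m.toSyn (leadExp m h') < b := by
      rw [← hb]
      apply lt_of_le_of_ne (hsupb _ (leadExp_mem_support h'0))
      intro hcon
      have heq : leadExp m h' = u := m.toSyn.injective hcon
      have hmem := leadExp_mem_support (m := m) (p := h') h'0
      rw [heq, mem_support_iff] at hmem
      exact hmem hcoeffu
    obtain ⟨q', hq'J, hq'⟩ := IH _ hlt h' rfl (Submodule.sub_mem _ hJmem hPJ) hhom' hdvd'
    refine ⟨q' + monomial ((u - w) - Finsupp.single i 1) c * g',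
      J.add_mem hq'J (J.mul_mem_left _ hg'J), ?_⟩
    have hsum : h = h' + P := by rw [hh', sub_add_cancel]
    rw [hsum, hq', hP, ← hXP, mul_assoc, ← mul_add]

lemma starProd (J : Ideal (MvPolynomial (Fin n) K))
    (hJhom : ∀ f ∈ J, ∀ d : ℕ, homogeneousComponent d f ∈ J)
    (H : Finset (MvPolynomial (Fin n) K))
    (hH : ∀ m : MonomialOrder (Fin n), IsGroebnerBasis m J H)
    (D : ℕ) (hD : D = H.sup totalDegree)
    {f : MvPolynomial (Fin n) K} {df : ℕ} (hf : f.IsHomogeneous df)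
    (hfJ : f * (∏ j, X j) ^ (D + 1) ∈ J) : f * (∏ j, X j) ^ D ∈ J := by
  have main : ∀ S : Finset (Fin n),
      f * ((∏ j ∈ S, X j ^ D) * (∏ j ∈ Sᶜ, X j ^ (D + 1))) ∈ J := by
    intro S
    induction S using Finset.induction with
    | empty => simpa [Finset.prod_pow] using hfJ
    | @insert j S hjS ih =>
      set rest := f * ((∏ k ∈ S, X k ^ D) * (∏ k ∈ (insert j S)ᶜ, X k ^ (D + 1)))
        with hrest
      have hjc : j ∈ Sᶜ := Finset.mem_compl.mpr hjS
      have hsplit : f * ((∏ k ∈ S, X k ^ D) * ∏ k ∈ Sᶜ, X k ^ (D + 1))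
          = X j ^ (D + 1) * rest := by
        rw [hrest, Finset.compl_insert, ← Finset.mul_prod_erase Sᶜ _ hjc]
        ring
      have hdvdX : (X j : MvPolynomial (Fin n) K) ^ (D + 1)
          ∣ f * ((∏ k ∈ S, X k ^ D) * ∏ k ∈ Sᶜ, X k ^ (D + 1)) := ⟨rest, hsplit⟩
      have h1 : (∏ k ∈ S, (X k : MvPolynomial (Fin n) K) ^ D).IsHomogeneous (∑ _k ∈ S, D) :=
        IsHomogeneous.prod _ _ _ fun k _ => isHomogeneous_X_pow k D
      have h2 : (∏ k ∈ Sᶜ, (X k : MvPolynomial (Fin n) K) ^ (D + 1)).IsHomogeneous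
          (∑ _k ∈ Sᶜ, (D + 1)) :=
        IsHomogeneous.prod _ _ _ fun k _ => isHomogeneous_X_pow k (D + 1)
      have hfull := hf.mul (h1.mul h2)
      obtain ⟨q, hqJ, hq⟩ := star J hJhom H hH D hD j _ _ ih hfull hdvdX
      have hq' : q = X j ^ D * rest := by
        apply mul_left_cancel₀ (X_ne_zero j)
        rw [← hq, hsplit]
        ring
      have hgoal : f * ((∏ k ∈ insert j S, X k ^ D) * ∏ k ∈ (insert j S)ᶜ, X k ^ (D + 1))
          = X j ^ D * rest := by
        rw [hrest, Finset.prod_insert hjS]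
        ring
      rw [hgoal, ← hq']
      exact hqJ
  have := main Finset.univ
  simpa [Finset.prod_pow] using this

lemma homComp_mul (f g : MvPolynomial (Fin n) K) {e : ℕ} (hg : g.IsHomogeneous e) (d : ℕ) :
    homogeneousComponent (d + e) (f * g) = homogeneousComponent d f * g := by
  conv_lhs => rw [← sum_homogeneousComponent f]
  rw [Finset.sum_mul, map_sum]
  have key : ∀ j ∈ Finset.range (f.totalDegree + 1),
      homogeneousComponent (d + e) (homogeneousComponent j f * g)
        = if j = d then homogeneousComponent j f * g else 0 := by
    intro j _
    rw [homogeneousComponent_of_mem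
      ((mem_homogeneousSubmodule _ _).mpr ((homogeneousComponent_isHomogeneous j f).mul hg))]
    exact if_congr (by omega) rfl rfl
  rw [Finset.sum_congr rfl key, Finset.sum_ite_eq' (Finset.range (f.totalDegree + 1)) d
    (fun j => homogeneousComponent j f * g)]
  split
  · rfl
  · next hd =>
    rw [homogeneousComponent_eq_zero _ f (by simp only [Finset.mem_range] at hd; omega),
      zero_mul]

lemma prodX_hom : (∏ j, (X j : MvPolynomial (Fin n) K)).IsHomogeneous n := by
  have := IsHomogeneous.prod Finset.univ (fun j => (X j : MvPolynomial (Fin n) K))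
    (fun _ => 1) (fun k _ => isHomogeneous_X _ k)
  simpa using this

lemma down_step (J : Ideal (MvPolynomial (Fin n) K))
    (hJhom : ∀ f ∈ J, ∀ d : ℕ, homogeneousComponent d f ∈ J)
    (H : Finset (MvPolynomial (Fin n) K))
    (hH : ∀ m : MonomialOrder (Fin n), IsGroebnerBasis m J H)
    (D : ℕ) (hD : D = H.sup totalDegree) :
    ∀ j (f : MvPolynomial (Fin n) K),
      f * (∏ i, X i) ^ (D + j) ∈ J → f * (∏ i, X i) ^ D ∈ J := by
  intro j
  induction j with
  | zero => exact fun f h => h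
  | succ j ih =>
    intro f hmem
    apply ih
    set t := ∏ i : Fin n, (X i : MvPolynomial (Fin n) K) with ht
    have htpow : ∀ a : ℕ, ((t : MvPolynomial (Fin n) K) ^ a).IsHomogeneous (n * a) :=
      fun a => prodX_hom.pow a
    have hmem' : f * t ^ (D + j + 1) ∈ J := by
      rwa [show D + j + 1 = D + (j + 1) by omega]
    have hcomp : ∀ d : ℕ, homogeneousComponent d f * t ^ (D + j + 1) ∈ J := by
      intro d
      rw [← homComp_mul f (t ^ (D + j + 1)) (htpow _) d]
      exact hJhom _ hmem' _
    have hstep : ∀ d : ℕ, homogeneousComponent d f * t ^ (D + j) ∈ J := by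
      intro d
      have h1 : (homogeneousComponent d f * t ^ j) * t ^ (D + 1) ∈ J := by
        rw [mul_assoc, ← pow_add, show j + (D + 1) = D + j + 1 by omega]
        exact hcomp d
      have h2 := starProd J hJhom H hH D hD
        ((homogeneousComponent_isHomogeneous d f).mul (htpow j)) h1
      rwa [mul_assoc, ← pow_add, show j + D = D + j by omega] at h2
    have hsum : f * t ^ (D + j)
        = ∑ d ∈ Finset.range (f.totalDegree + 1), homogeneousComponent d f * t ^ (D + j) := by
      rw [← Finset.sum_mul, sum_homogeneousComponent]
    rw [hsum]
    exact Ideal.sum_mem J fun d _ => hstep d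

/-- If `H` is a universal Gröbner basis of a homogeneous ideal `J`, then the
saturation exponent of `J` with respect to `x₁⋯xₙ` is at most `deg H`: already
the ideal quotient `J : (x₁⋯xₙ)^(deg H)` equals the full saturation
`⋃ₖ J : (x₁⋯xₙ)^k`. -/
theorem saturation_exponent_le_deg_universal_groebner_basis
    (J : Ideal (MvPolynomial (Fin n) K))
    (hJhom : ∀ f ∈ J, ∀ d : ℕ, homogeneousComponent d f ∈ J)
    (H : Finset (MvPolynomial (Fin n) K))
    (hH : ∀ m : MonomialOrder (Fin n), IsGroebnerBasis m J H)
    (D : ℕ) (hD : D = H.sup totalDegree) :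
    Submodule.colon J (Ideal.span {(∏ i, X i) ^ D} : Ideal (MvPolynomial (Fin n) K)) =
      ⨆ k : ℕ, Submodule.colon J (Ideal.span {(∏ i, X i) ^ k} : Ideal (MvPolynomial (Fin n) K)) := by
  apply le_antisymm
  · exact le_iSup (fun k : ℕ => Submodule.colon J (Ideal.span {(∏ i, X i) ^ k} : Ideal (MvPolynomial (Fin n) K))) D
  · apply iSup_le
    intro k f hf
    rw [Submodule.mem_colon_span_singleton, smul_eq_mul] at hf ⊢
    set t := ∏ i : Fin n, (X i : MvPolynomial (Fin n) K) with ht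
    have h1 : f * t ^ (D + (max k D - D)) ∈ J := by
      rw [show D + (max k D - D) = k + (max k D - k) by omega, pow_add, ← mul_assoc]
      exact J.mul_mem_right _ hf
    exact down_step J hJhom H hH D hD (max k D - D) f h1
end

section
/- For d ≥ 1 and n ≥ 3, the maximal number of vertices λ_0(d,n) of a lattice polytope contained in the dilated simplex d·Δ_{n−1} satisfies λ_0(d,n) ≤ λ_0(d−1,n) + λ_0(d,n−1) (for d ≥ 2), λ_0(1,n) = n, and λ_0(d,2) = 2. -/
/-- `lam0 d n` is the maximal number of vertices (extreme points) of a lattice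
polytope contained in the dilated standard simplex `d·Δ_{n-1} ⊂ ℝ^n`. -/
noncomputable def lam0 (d n : ℕ) : ℕ :=
  sSup {k | ∃ V : Finset (Fin n → ℕ), V.Nonempty ∧ (∀ v ∈ V, ∑ i, v i = d) ∧
    k = (Set.extremePoints ℝ
      (convexHull ℝ ((fun v : Fin n → ℕ => fun i => (v i : ℝ)) '' (V : Set (Fin n → ℕ))))).ncard}

open Set

section Aux
variable {E F : Type*} [AddCommGroup E] [Module ℝ E] [AddCommGroup F] [Module ℝ F]

lemma extremePoints_affine_image (φ : E →ᵃ[ℝ] F) (hφ : Function.Injective φ) (s : Set E) :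
    Set.extremePoints ℝ (φ '' s) = φ '' Set.extremePoints ℝ s := by
  ext y
  constructor
  · rintro ⟨⟨x, hx, rfl⟩, h⟩
    refine ⟨x, ⟨hx, fun x₁ h₁ x₂ h₂ hseg => ?_⟩, rfl⟩
    have hm : φ x ∈ openSegment ℝ (φ x₁) (φ x₂) := by
      rw [← image_openSegment ℝ φ]; exact ⟨x, hseg, rfl⟩
    have := h ⟨x₁, h₁, rfl⟩ ⟨x₂, h₂, rfl⟩ hm
    exact hφ this
  · rintro ⟨x, ⟨hx, h⟩, rfl⟩
    refine ⟨⟨x, hx, rfl⟩, ?_⟩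
    rintro _ ⟨x₁, h₁, rfl⟩ _ ⟨x₂, h₂, rfl⟩ hseg
    rw [← image_openSegment ℝ φ] at hseg
    obtain ⟨z, hz, hz'⟩ := hseg
    obtain rfl := hφ hz'
    obtain rfl := h h₁ h₂ hz
    exact rfl

lemma ncard_extremePoints_affine_image (φ : E →ᵃ[ℝ] F) (hφ : Function.Injective φ) (s : Set E) :
    (Set.extremePoints ℝ (convexHull ℝ (φ '' s))).ncard
      = (Set.extremePoints ℝ (convexHull ℝ s)).ncard := by
  rw [← AffineMap.image_convexHull, extremePoints_affine_image φ hφ,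
    Set.ncard_image_of_injective _ hφ]

lemma mem_extremePoints_of_max {A : Set E} (l : E →ₗ[ℝ] ℝ) {x : E} (hx : x ∈ A)
    (hmax : ∀ y ∈ A, l y ≤ l x) (huniq : ∀ y ∈ A, l y = l x → y = x) :
    x ∈ Set.extremePoints ℝ A := by
  refine ⟨hx, fun x₁ h₁ x₂ h₂ hseg => ?_⟩
  obtain ⟨a, b, ha, hb, hab, hs⟩ := hseg
  have hl : a * l x₁ + b * l x₂ = l x := by
    rw [← hs]; simp [smul_eq_mul]
  have hsum : a * l x + b * l x = l x := by rw [← add_mul, hab, one_mul]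
  have k1 := mul_le_mul_of_nonneg_left (hmax x₁ h₁) ha.le
  have k2 := mul_le_mul_of_nonneg_left (hmax x₂ h₂) hb.le
  have e1 : l x₁ = l x := by
    by_contra h
    have h' : l x₁ < l x := lt_of_le_of_ne (hmax x₁ h₁) h
    have := mul_lt_mul_of_pos_left h' ha
    linarith
  have e2 : l x₂ = l x := by
    by_contra h
    have h' : l x₂ < l x := lt_of_le_of_ne (hmax x₂ h₂) h
    have := mul_lt_mul_of_pos_left h' hb
    linarith
  exact huniq _ h₁ e1

end Aux

def castR {n : ℕ} (v : Fin n → ℕ) : Fin n → ℝ := fun i => (v i : ℝ)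

def lamSet (d n : ℕ) : Set ℕ :=
  {k | ∃ V : Finset (Fin n → ℕ), V.Nonempty ∧ (∀ v ∈ V, ∑ i, v i = d) ∧
    k = (Set.extremePoints ℝ
      (convexHull ℝ ((fun v : Fin n → ℕ => fun i => (v i : ℝ)) '' (V : Set (Fin n → ℕ))))).ncard}

lemma castR_image (n : ℕ) (V : Finset (Fin n → ℕ)) :
    (fun v : Fin n → ℕ => fun i => (v i : ℝ)) '' (V : Set (Fin n → ℕ)) = castR '' ↑V := rfl

lemma lam0_eq_sSup (d n : ℕ) : lam0 d n = sSup (lamSet d n) := rfl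

lemma lamSet_bddAbove (d n : ℕ) : BddAbove (lamSet d n) := by
  refine ⟨(d+1)^n, fun k hk => ?_⟩
  obtain ⟨V, hV, hsum, rfl⟩ := hk
  rw [castR_image]
  have hfin : (castR '' (V : Set (Fin n → ℕ))).Finite := V.finite_toSet.image _
  have h1 : (Set.extremePoints ℝ (convexHull ℝ (castR '' ↑V))).ncard ≤ (castR '' (V : Set (Fin n → ℕ))).ncard :=
    Set.ncard_le_ncard extremePoints_convexHull_subset hfin
  have h2 : (castR '' (V : Set (Fin n → ℕ))).ncard ≤ (V : Set (Fin n → ℕ)).ncard :=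
    Set.ncard_image_le V.finite_toSet
  have h3 : (V : Set (Fin n → ℕ)).ncard = V.card := Set.ncard_coe_finset V
  have hle : ∀ v ∈ V, ∀ i, v i ≤ d := by
    intro v hv i
    have := Finset.single_le_sum (f := v) (fun _ _ => Nat.zero_le _) (Finset.mem_univ i)
    rw [hsum v hv] at this
    exact this
  have h4 : V.card ≤ (d+1)^n := by
    have : V.card ≤ Fintype.card (Fin n → Fin (d+1)) := by
      apply Finset.card_le_card_of_injOn (fun v i => (⟨min (v i) d, by omega⟩ : Fin (d+1)))
        (fun v _ => Finset.mem_univ _)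
      intro v hv w hw h
      funext i
      have hv' := hle v hv i
      have hw' := hle w hw i
      have h' := congrFun h i
      rw [Fin.mk.injEq] at h'
      omega
    simpa [Fintype.card_fun] using this
  omega

lemma lamSet_nonempty (d n : ℕ) (hn : 0 < n) : (lamSet d n).Nonempty := by
  refine ⟨_, {fun i => if i = (⟨0, hn⟩ : Fin n) then d else 0}, Finset.singleton_nonempty _, ?_, rfl⟩
  intro v hv
  rw [Finset.mem_singleton] at hv
  subst hv
  simp [Finset.sum_ite_eq']

noncomputable def extLin (m : ℕ) : (Fin m → ℝ) →ₗ[ℝ] (Fin (m+1) → ℝ) where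
  toFun x := Fin.snoc x 0
  map_add' x y := by
    funext i
    refine Fin.lastCases ?_ (fun j => ?_) i <;> simp
  map_smul' c x := by
    funext i
    refine Fin.lastCases ?_ (fun j => ?_) i <;> simp

lemma extLin_injective (m : ℕ) : Function.Injective (extLin m) := by
  intro x y h
  funext i
  have := congrFun h (Fin.castSucc i)
  simpa [extLin] using this

-- the key image identity for the zero-last-coordinate part
lemma image_restrict (m : ℕ) (V₀ : Finset (Fin (m+1) → ℕ))
    (hz : ∀ v ∈ V₀, v (Fin.last m) = 0) :
    castR '' (V₀ : Set (Fin (m+1) → ℕ)) =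
      (extLin m) '' (castR '' ((V₀.image (fun v => v ∘ Fin.castSucc) : Finset (Fin m → ℕ)) : Set (Fin m → ℕ))) := by
  rw [Finset.coe_image, Set.image_image, Set.image_image]
  apply Set.image_congr
  intro v hv
  funext i
  refine Fin.lastCases ?_ (fun j => ?_) i
  · simp [extLin, castR, hz v hv]
  · simp [extLin, castR]

lemma sum_restrict (m d : ℕ) (v : Fin (m+1) → ℕ) (hz : v (Fin.last m) = 0)
    (hsum : ∑ i, v i = d) : ∑ i : Fin m, (v ∘ Fin.castSucc) i = d := by
  rw [Fin.sum_univ_castSucc] at hsum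
  simpa [hz] using hsum

-- translation part: subtract 1 from last coordinate
def subLast (m : ℕ) (v : Fin (m+1) → ℕ) : Fin (m+1) → ℕ :=
  Function.update v (Fin.last m) (v (Fin.last m) - 1)

lemma sum_subLast (m d : ℕ) (v : Fin (m+1) → ℕ) (hp : v (Fin.last m) ≠ 0)
    (hsum : ∑ i, v i = d) : ∑ i, subLast m v i = d - 1 := by
  rw [Fin.sum_univ_castSucc] at hsum ⊢
  have h1 : ∀ j : Fin m, subLast m v (Fin.castSucc j) = v (Fin.castSucc j) := by
    intro j
    exact Function.update_of_ne (Fin.castSucc_lt_last j).ne _ _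
  simp only [h1]
  have h2 : subLast m v (Fin.last m) = v (Fin.last m) - 1 := Function.update_self _ _ _
  rw [h2]
  omega

noncomputable def eLast (m : ℕ) : Fin (m+1) → ℝ := fun i => if i = Fin.last m then 1 else 0

lemma image_subLast (m : ℕ) (V₁ : Finset (Fin (m+1) → ℕ))
    (hp : ∀ v ∈ V₁, v (Fin.last m) ≠ 0) :
    castR '' (V₁ : Set (Fin (m+1) → ℕ)) =
      (AffineEquiv.constVAdd ℝ (Fin (m+1) → ℝ) (eLast m)) ''
        (castR '' ((V₁.image (subLast m) : Finset (Fin (m+1) → ℕ)) : Set (Fin (m+1) → ℕ))) := by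
  rw [Finset.coe_image, Set.image_image, Set.image_image]
  apply Set.image_congr
  intro v hv
  funext i
  show (v i : ℝ) = eLast m i + castR (subLast m v) i
  by_cases h : i = Fin.last m
  · subst h
    have h1 : 1 ≤ v (Fin.last m) := Nat.one_le_iff_ne_zero.2 (hp v hv)
    simp [eLast, castR, subLast, Function.update_self]
    push_cast [Nat.cast_sub h1]
    ring
  · simp [eLast, castR, subLast, Function.update_of_ne h, h]

-- NEW PART
lemma ncard_zero_mem (d m : ℕ) (V₀ : Finset (Fin (m+1) → ℕ)) (h0 : V₀.Nonempty)
    (hsum : ∀ v ∈ V₀, ∑ i, v i = d) (hz : ∀ v ∈ V₀, v (Fin.last m) = 0) :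
    (Set.extremePoints ℝ (convexHull ℝ (castR '' (V₀ : Set (Fin (m+1) → ℕ))))).ncard ∈ lamSet d m := by
  refine ⟨V₀.image (fun v => v ∘ Fin.castSucc), h0.image _, ?_, ?_⟩
  · intro w hw
    rw [Finset.mem_image] at hw
    obtain ⟨v, hv, rfl⟩ := hw
    exact sum_restrict m d v (hz v hv) (hsum v hv)
  · rw [castR_image, image_restrict m V₀ hz]
    have := ncard_extremePoints_affine_image (extLin m).toAffineMap (extLin_injective m)
      (castR '' ((V₀.image (fun v => v ∘ Fin.castSucc) : Finset (Fin m → ℕ)) : Set (Fin m → ℕ)))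
    simpa using this

lemma ncard_pos_mem (d m : ℕ) (V₁ : Finset (Fin (m+1) → ℕ)) (h1 : V₁.Nonempty)
    (hsum : ∀ v ∈ V₁, ∑ i, v i = d) (hp : ∀ v ∈ V₁, v (Fin.last m) ≠ 0) :
    (Set.extremePoints ℝ (convexHull ℝ (castR '' (V₁ : Set (Fin (m+1) → ℕ))))).ncard ∈ lamSet (d-1) (m+1) := by
  refine ⟨V₁.image (subLast m), h1.image _, ?_, ?_⟩
  · intro w hw
    rw [Finset.mem_image] at hw
    obtain ⟨v, hv, rfl⟩ := hw
    exact sum_subLast m d v (hp v hv) (hsum v hv)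
  · rw [castR_image, image_subLast m V₁ hp]
    have := ncard_extremePoints_affine_image
      (AffineEquiv.constVAdd ℝ (Fin (m+1) → ℝ) (eLast m)).toAffineMap
      (AffineEquiv.constVAdd ℝ (Fin (m+1) → ℝ) (eLast m)).injective
      (castR '' ((V₁.image (subLast m) : Finset (Fin (m+1) → ℕ)) : Set (Fin (m+1) → ℕ)))
    simpa using this

lemma recursion_aux (d m : ℕ) (hm : 0 < m) :
    sSup (lamSet d (m+1)) ≤ sSup (lamSet (d-1) (m+1)) + sSup (lamSet d m) := by
  apply csSup_le (lamSet_nonempty d (m+1) (by omega))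
  rintro k ⟨V, hV, hsum, rfl⟩
  rw [castR_image]
  set A := castR '' (V : Set (Fin (m+1) → ℕ)) with hA
  set E := Set.extremePoints ℝ (convexHull ℝ A) with hE
  have hAfin : A.Finite := V.finite_toSet.image _
  have hEsub : E ⊆ A := extremePoints_convexHull_subset
  have hEfin : E.Finite := hAfin.subset hEsub
  set V₀ := V.filter (fun v => v (Fin.last m) = 0) with hV₀
  set V₁ := V.filter (fun v => ¬ v (Fin.last m) = 0) with hV₁
  set A₀ := castR '' (V₀ : Set (Fin (m+1) → ℕ)) with hA₀
  set A₁ := castR '' (V₁ : Set (Fin (m+1) → ℕ)) with hA₁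
  have hAunion : A ⊆ A₀ ∪ A₁ := by
    rintro _ ⟨v, hv, rfl⟩
    by_cases h : v (Fin.last m) = 0
    · exact Or.inl ⟨v, Finset.mem_coe.2 (Finset.mem_filter.2 ⟨Finset.mem_coe.1 hv, h⟩), rfl⟩
    · exact Or.inr ⟨v, Finset.mem_coe.2 (Finset.mem_filter.2 ⟨Finset.mem_coe.1 hv, h⟩), rfl⟩
  have hsplit : (E ∩ A₀).ncard + (E \ A₀).ncard = E.ncard :=
    Set.ncard_inter_add_ncard_diff_eq_ncard E A₀ hEfin
  -- bound the zero part
  have hb0 : (E ∩ A₀).ncard ≤ sSup (lamSet d m) := by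
    rcases Finset.eq_empty_or_nonempty V₀ with h | h
    · have : E ∩ A₀ = ∅ := by
        simp [hA₀, h]
      simp [this]
    · have hsub : E ∩ A₀ ⊆ Set.extremePoints ℝ (convexHull ℝ A₀) := by
        intro x hx
        apply inter_extremePoints_subset_extremePoints_of_subset
          (convexHull_mono (Set.image_mono (by exact_mod_cast Finset.filter_subset _ V)))
        exact ⟨subset_convexHull ℝ A₀ hx.2, hx.1⟩
      have hfin0 : (Set.extremePoints ℝ (convexHull ℝ A₀)).Finite :=
        (V₀.finite_toSet.image _).subset extremePoints_convexHull_subset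
      have hle := Set.ncard_le_ncard hsub hfin0
      have hmem := ncard_zero_mem d m V₀ h
        (fun v hv => hsum v (Finset.filter_subset _ V hv))
        (fun v hv => (Finset.mem_filter.1 hv).2)
      exact hle.trans (le_csSup (lamSet_bddAbove d m) hmem)
  have hb1 : (E \ A₀).ncard ≤ sSup (lamSet (d-1) (m+1)) := by
    rcases Finset.eq_empty_or_nonempty V₁ with h | h
    · have : E \ A₀ = ∅ := by
        rw [Set.diff_eq_empty]
        intro x hx
        rcases hAunion (hEsub hx) with h' | h'
        · exact h'
        · simp [hA₁, h] at h'
      simp [this]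
    · have hsub : E \ A₀ ⊆ Set.extremePoints ℝ (convexHull ℝ A₁) := by
        intro x hx
        have hx1 : x ∈ A₁ := by
          rcases hAunion (hEsub hx.1) with h' | h'
          · exact absurd h' hx.2
          · exact h'
        apply inter_extremePoints_subset_extremePoints_of_subset
          (convexHull_mono (Set.image_mono (by exact_mod_cast Finset.filter_subset _ V)))
        exact ⟨subset_convexHull ℝ A₁ hx1, hx.1⟩
      have hfin1 : (Set.extremePoints ℝ (convexHull ℝ A₁)).Finite :=
        (V₁.finite_toSet.image _).subset extremePoints_convexHull_subset
      have hle := Set.ncard_le_ncard hsub hfin1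
      have hmem := ncard_pos_mem d m V₁ h
        (fun v hv => hsum v (Finset.filter_subset _ V hv))
        (fun v hv => (Finset.mem_filter.1 hv).2)
      exact hle.trans (le_csSup (lamSet_bddAbove (d-1) (m+1)) hmem)
  omega

-- the unit vectors
def unitN (n : ℕ) (i : Fin n) : Fin n → ℕ := fun j => if i = j then 1 else 0
noncomputable def unitR (n : ℕ) (i : Fin n) : Fin n → ℝ := fun j => if i = j then 1 else 0

lemma castR_unitN (n : ℕ) (i : Fin n) : castR (unitN n i) = unitR n i := by
  funext j
  simp [castR, unitN, unitR, apply_ite]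

lemma unitR_injective (n : ℕ) : Function.Injective (unitR n) := by
  intro i i' h
  by_contra hne
  have := congrFun h i
  simp [unitR, Ne.symm hne] at this

lemma eq_unitR_of_mem_stdSimplex {n : ℕ} {y : Fin n → ℝ} (hy : y ∈ stdSimplex ℝ (Fin n))
    {i : Fin n} (h1 : y i = 1) : y = unitR n i := by
  have hz : ∑ j ∈ Finset.univ.erase i, y j = 0 := by
    have := Finset.add_sum_erase Finset.univ y (Finset.mem_univ i)
    rw [hy.2] at this
    rw [h1] at this
    linarith
  have hzero : ∀ j ∈ Finset.univ.erase i, y j = 0 :=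
    (Finset.sum_eq_zero_iff_of_nonneg (fun j _ => hy.1 j)).1 hz
  funext j
  by_cases h : i = j
  · subst h; simpa [unitR] using h1
  · have := hzero j (Finset.mem_erase.2 ⟨Ne.symm h, Finset.mem_univ j⟩)
    simp [unitR, h, this]

lemma convexHull_unitR (n : ℕ) : convexHull ℝ (Set.range (unitR n)) = stdSimplex ℝ (Fin n) := by
  rw [← convexHull_basis_eq_stdSimplex (Fin n) (R := ℝ)]
  congr 1

lemma extremePoints_stdSimplex (n : ℕ) :
    Set.extremePoints ℝ (stdSimplex ℝ (Fin n)) = Set.range (unitR n) := by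
  apply Set.Subset.antisymm
  · intro x hx
    rw [← convexHull_unitR n] at hx
    exact extremePoints_convexHull_subset (𝕜 := ℝ) hx
  · rintro _ ⟨i, rfl⟩
    apply mem_extremePoints_of_max (LinearMap.proj i)
    · refine ⟨fun j => ?_, ?_⟩
      · by_cases h : i = j <;> simp [unitR, h]
      · simp [unitR, Finset.sum_ite_eq]
    · intro y hy
      have : y i ≤ ∑ j, y j := Finset.single_le_sum (fun j _ => hy.1 j) (Finset.mem_univ i)
      rw [hy.2] at this
      simpa [unitR] using this
    · intro y hy h
      have h1 : y i = 1 := by simpa [unitR] using h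
      exact eq_unitR_of_mem_stdSimplex hy h1

lemma eq_unitN_of_sum_one {n : ℕ} {v : Fin n → ℕ} (h : ∑ i, v i = 1) :
    ∃ j, v = unitN n j := by
  have hne : ∑ i, v i ≠ 0 := by omega
  obtain ⟨j, -, hj⟩ := Finset.exists_ne_zero_of_sum_ne_zero hne
  have hle : v j ≤ 1 := by
    have := Finset.single_le_sum (f := v) (fun _ _ => Nat.zero_le _) (Finset.mem_univ j)
    omega
  have hz : ∑ i ∈ Finset.univ.erase j, v i = 0 := by
    have := Finset.add_sum_erase Finset.univ v (Finset.mem_univ j)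
    omega
  refine ⟨j, funext fun i => ?_⟩
  by_cases hij : j = i
  · subst hij; simp [unitN]; omega
  · have := (Finset.sum_eq_zero_iff).1 hz i (Finset.mem_erase.2 ⟨Ne.symm hij, Finset.mem_univ i⟩)
    simp [unitN, hij, this]

lemma lamSet_one_le (n : ℕ) (k : ℕ) (hk : k ∈ lamSet 1 n) : k ≤ n := by
  obtain ⟨V, hV, hsum, rfl⟩ := hk
  rw [castR_image]
  have hsub : castR '' (V : Set (Fin n → ℕ)) ⊆ Set.range (unitR n) := by
    rintro _ ⟨v, hv, rfl⟩
    obtain ⟨j, rfl⟩ := eq_unitN_of_sum_one (hsum v (by simpa using hv))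
    exact ⟨j, (castR_unitN n j).symm⟩
  have h1 : (Set.extremePoints ℝ (convexHull ℝ (castR '' (V : Set (Fin n → ℕ))))).ncard
      ≤ (Set.range (unitR n)).ncard := by
    apply Set.ncard_le_ncard _ (Set.finite_range _)
    exact (extremePoints_convexHull_subset).trans hsub
  have h2 : (Set.range (unitR n)).ncard = n := by
    rw [← Set.image_univ, Set.ncard_image_of_injective _ (unitR_injective n),
      Set.ncard_univ, Nat.card_eq_fintype_card, Fintype.card_fin]
  omega

lemma lamSet_one_mem (n : ℕ) (hn : 0 < n) : n ∈ lamSet 1 n := by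
  haveI : Nonempty (Fin n) := Fin.pos_iff_nonempty.1 hn
  refine ⟨Finset.univ.image (unitN n), Finset.univ_nonempty.image _, ?_, ?_⟩
  · intro v hv
    rw [Finset.mem_image] at hv
    obtain ⟨j, -, rfl⟩ := hv
    simp [unitN, Finset.sum_ite_eq]
  · rw [castR_image, Finset.coe_image, Finset.coe_univ, Set.image_univ, ← Set.range_comp]
    have hcomp : castR ∘ unitN n = unitR n := funext fun i => castR_unitN n i
    rw [hcomp]
    rw [convexHull_unitR n, extremePoints_stdSimplex]
    rw [← Set.image_univ, Set.ncard_image_of_injective _ (unitR_injective n),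
      Set.ncard_univ, Nat.card_eq_fintype_card, Fintype.card_fin]

-- UPPER BOUND for n = 2
lemma lamSet_two_le (d : ℕ) (k : ℕ) (hk : k ∈ lamSet d 2) : k ≤ 2 := by
  obtain ⟨V, hV, hsum, rfl⟩ := hk
  rw [castR_image]
  obtain ⟨a, haV, hamin⟩ := V.exists_min_image (fun v => v 0) hV
  obtain ⟨b, hbV, hbmax⟩ := V.exists_max_image (fun v => v 0) hV
  have hline : ∀ v ∈ V, (v 0 : ℝ) + (v 1 : ℝ) = (d : ℝ) := by
    intro v hv
    have := hsum v hv
    rw [Fin.sum_univ_two] at this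
    exact_mod_cast this
  have hsub : castR '' (V : Set (Fin 2 → ℕ)) ⊆ segment ℝ (castR a) (castR b) := by
    rintro _ ⟨v, hv, rfl⟩
    have hv' : v ∈ V := hv
    have h1 : a 0 ≤ v 0 := hamin v hv'
    have h2 : v 0 ≤ b 0 := hbmax v hv'
    rcases eq_or_lt_of_le (h1.trans h2) with heq | hlt
    · -- a 0 = b 0, all equal
      have hv0 : v 0 = a 0 := by omega
      have hva : castR v = castR a := by
        funext i
        have e0 : (v 0 : ℝ) = (a 0 : ℝ) := by exact_mod_cast hv0
        have e1 : (v 1 : ℝ) = (a 1 : ℝ) := by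
          have := hline v hv'
          have := hline a haV
          linarith
        revert i
        rw [Fin.forall_fin_two]
        exact ⟨e0, e1⟩
      rw [hva]
      exact left_mem_segment ℝ _ _
    · set D : ℝ := (b 0 : ℝ) - (a 0 : ℝ) with hD
      have hDpos : 0 < D := by
        rw [hD]; have : (a 0 : ℝ) < (b 0 : ℝ) := by exact_mod_cast hlt
        linarith
      refine ⟨((b 0 : ℝ) - v 0) / D, ((v 0 : ℝ) - a 0) / D, ?_, ?_, ?_, ?_⟩
      · apply div_nonneg _ hDpos.le
        have : (v 0 : ℝ) ≤ (b 0 : ℝ) := by exact_mod_cast h2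
        linarith
      · apply div_nonneg _ hDpos.le
        have : (a 0 : ℝ) ≤ (v 0 : ℝ) := by exact_mod_cast h1
        linarith
      · field_simp
        linarith
      · funext i
        have e0a := hline a haV
        have e0b := hline b hbV
        have e0v := hline v hv'
        revert i
        rw [Fin.forall_fin_two]
        constructor
        · show ((b 0 : ℝ) - v 0) / D * (a 0 : ℝ) + ((v 0 : ℝ) - a 0) / D * (b 0 : ℝ) = (v 0 : ℝ)
          field_simp
          ring
        · show ((b 0 : ℝ) - v 0) / D * (a 1 : ℝ) + ((v 0 : ℝ) - a 0) / D * (b 1 : ℝ) = (v 1 : ℝ)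
          have ha1 : (a 1 : ℝ) = d - a 0 := by linarith
          have hb1 : (b 1 : ℝ) = d - b 0 := by linarith
          have hv1 : (v 1 : ℝ) = d - v 0 := by linarith
          rw [ha1, hb1, hv1]
          field_simp
          ring
  have hEsub : Set.extremePoints ℝ (convexHull ℝ (castR '' (V : Set (Fin 2 → ℕ))))
      ⊆ {castR a, castR b} := by
    intro x hx
    have hxseg : x ∈ segment ℝ (castR a) (castR b) :=
      convexHull_min hsub (convex_segment _ _) hx.1
    by_contra hne
    rw [Set.mem_insert_iff, Set.mem_singleton_iff] at hne
    push_neg at hne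
    have hopen : x ∈ openSegment ℝ (castR a) (castR b) :=
      mem_openSegment_of_ne_left_right (Ne.symm hne.1) (Ne.symm hne.2) hxseg
    have ha' : castR a ∈ convexHull ℝ (castR '' (V : Set (Fin 2 → ℕ))) :=
      subset_convexHull ℝ _ ⟨a, haV, rfl⟩
    have hb' : castR b ∈ convexHull ℝ (castR '' (V : Set (Fin 2 → ℕ))) :=
      subset_convexHull ℝ _ ⟨b, hbV, rfl⟩
    exact hne.1 (hx.2 ha' hb' hopen).symm
  calc (Set.extremePoints ℝ (convexHull ℝ (castR '' (V : Set (Fin 2 → ℕ))))).ncard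
      ≤ ({castR a, castR b} : Set (Fin 2 → ℝ)).ncard :=
        Set.ncard_le_ncard hEsub (Set.toFinite _)
    _ ≤ 2 := by
        have := Set.ncard_insert_le (castR a) ({castR b} : Set (Fin 2 → ℝ))
        simpa using this

lemma lamSet_two_mem (d : ℕ) (hd : 1 ≤ d) : 2 ∈ lamSet d 2 := by
  classical
  set p : Fin 2 → ℕ := fun i => if i = 0 then d else 0 with hp
  set q : Fin 2 → ℕ := fun i => if i = 0 then 0 else d with hq
  have hpq : p ≠ q := by
    intro h
    have := congrFun h 0
    simp [hp, hq] at this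
    omega
  refine ⟨{p, q}, Finset.insert_nonempty _ _, ?_, ?_⟩
  · intro v hv
    rw [Finset.mem_insert, Finset.mem_singleton] at hv
    rcases hv with rfl | rfl <;> simp [hp, hq, Fin.sum_univ_two]
  · rw [castR_image]
    have hcoe : (({p, q} : Finset (Fin 2 → ℕ)) : Set (Fin 2 → ℕ)) = {p, q} := by
      simp
    rw [hcoe, Set.image_pair, convexHull_pair]
    set P := castR p with hP
    set Q := castR q with hQ
    have hP0 : P 0 = (d : ℝ) := by simp [hP, castR, hp]
    have hP1 : P 1 = 0 := by simp [hP, castR, hp]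
    have hQ0 : Q 0 = 0 := by simp [hQ, castR, hq]
    have hQ1 : Q 1 = (d : ℝ) := by simp [hQ, castR, hq]
    have hdpos : (0 : ℝ) < d := by exact_mod_cast hd
    have hPQ : P ≠ Q := by
      intro h
      have := congrFun h 0
      rw [hP0, hQ0] at this
      linarith
    have hseg : ∀ y ∈ segment ℝ P Q, ∀ i : Fin 2, y i ≤ (d:ℝ) ∧ 0 ≤ y i := by
      rintro y ⟨s, t, hs, ht, hst, rfl⟩ i
      revert i
      rw [Fin.forall_fin_two]
      constructor
      · show s * P 0 + t * Q 0 ≤ (d:ℝ) ∧ 0 ≤ s * P 0 + t * Q 0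
        rw [hP0, hQ0]
        constructor <;> nlinarith
      · show s * P 1 + t * Q 1 ≤ (d:ℝ) ∧ 0 ≤ s * P 1 + t * Q 1
        rw [hP1, hQ1]
        constructor <;> nlinarith
    have hPext : P ∈ Set.extremePoints ℝ (segment ℝ P Q) := by
      apply mem_extremePoints_of_max (LinearMap.proj 0) (left_mem_segment ℝ P Q)
      · intro y hy
        have := (hseg y hy 0).1
        simpa [hP0] using this
      · rintro y ⟨s, t, hs, ht, hst, rfl⟩ h
        have h0 : s * P 0 + t * Q 0 = P 0 := h
        rw [hP0, hQ0] at h0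
        have hs1 : s = 1 := by nlinarith
        have ht0 : t = 0 := by linarith
        rw [hs1, ht0, one_smul, zero_smul, add_zero]
    have hQext : Q ∈ Set.extremePoints ℝ (segment ℝ P Q) := by
      apply mem_extremePoints_of_max (LinearMap.proj 1) (right_mem_segment ℝ P Q)
      · intro y hy
        have := (hseg y hy 1).1
        simpa [hQ1] using this
      · rintro y ⟨s, t, hs, ht, hst, rfl⟩ h
        have h0 : s * P 1 + t * Q 1 = Q 1 := h
        rw [hP1, hQ1] at h0
        have ht1 : t = 1 := by nlinarith
        have hs0 : s = 0 := by linarith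
        rw [ht1, hs0, one_smul, zero_smul, zero_add]
    have hE : Set.extremePoints ℝ (segment ℝ P Q) = {P, Q} := by
      apply Set.Subset.antisymm
      · rw [← convexHull_pair]
        exact extremePoints_convexHull_subset
      · rintro x (rfl | rfl)
        · exact hPext
        · exact hQext
    rw [hE, Set.ncard_pair hPQ]

/-- Recursion and base cases for the maximal vertex numbers of lattice
polytopes in dilated simplices: `λ₀(d,n) ≤ λ₀(d-1,n) + λ₀(d,n-1)` for `d ≥ 2`,
`λ₀(1,n) = n`, and `λ₀(d,2) = 2`. -/
theorem lam0_recursion (d n : ℕ) (hd : 1 ≤ d) (hn : 3 ≤ n) :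
    (2 ≤ d → lam0 d n ≤ lam0 (d - 1) n + lam0 d (n - 1)) ∧
    lam0 1 n = n ∧
    lam0 d 2 = 2 := by
  refine ⟨?_, ?_, ?_⟩
  · intro _
    obtain ⟨m, rfl⟩ : ∃ m, n = m + 1 := ⟨n - 1, by omega⟩
    simp only [lam0_eq_sSup, Nat.add_sub_cancel]
    exact recursion_aux d m (by omega)
  · rw [lam0_eq_sSup]
    apply le_antisymm
    · exact csSup_le (lamSet_nonempty 1 n (by omega)) (fun k hk => lamSet_one_le n k hk)
    · exact le_csSup (lamSet_bddAbove 1 n) (lamSet_one_mem n (by omega))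
  · rw [lam0_eq_sSup]
    apply le_antisymm
    · exact csSup_le (lamSet_nonempty d 2 (by omega)) (fun k hk => lamSet_two_le d k hk)
    · exact le_csSup (lamSet_bddAbove d 2) (lamSet_two_mem d hd)
end

section
/- Let n ≥ 2, s ≥ 1, d ≥ 1. Then for every 0 ≤ j ≤ n−1, Σ_{i=1}^{n−j} (−1)^{n+i−j} binomial(n−j−1, i−1) binomial(sdi+n−1, n−1) ≥ 0, i.e., the alternating sum appearing in the f-vector bound is nonnegative. -/
open Finset

/-- Hockey-stick style identity. -/
lemma fvb_hockey (K Q a : ℕ) :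
    (Q + a + K + 1).choose (K + 1)
      = (Q + K + 1).choose (K + 1) + ∑ r ∈ range a, (Q + r + 1 + K).choose K := by
  induction a with
  | zero => simp
  | succ a ih =>
    rw [sum_range_succ]
    have h1 : Q + (a + 1) + K + 1 = (Q + a + K + 1) + 1 := by ring
    rw [h1, Nat.choose_succ_succ (Q + a + K + 1) K, ih]
    have h2 : Q + a + 1 + K = Q + a + K + 1 := by ring
    rw [h2]
    ring

/-- Abel/Pascal summation for alternating sums. -/
lemma fvb_alt_pascal (M : ℕ) (B : ℕ → ℤ) :
    ∑ j ∈ range (M + 1 + 1), (-1 : ℤ) ^ j * ((M + 1).choose j : ℤ) * B j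
      = ∑ j ∈ range (M + 1), (-1 : ℤ) ^ j * (M.choose j : ℤ) * (B j - B (j + 1)) := by
  rw [Finset.sum_range_succ']
  have h1 : ∀ i, (-1 : ℤ) ^ (i + 1) * ((M + 1).choose (i + 1) : ℤ) * B (i + 1)
      = -((-1 : ℤ) ^ i * (M.choose (i + 1) : ℤ) * B (i + 1))
        + -((-1 : ℤ) ^ i * (M.choose i : ℤ) * B (i + 1)) := by
    intro i
    rw [Nat.choose_succ_succ]
    push_cast
    ring
  rw [Finset.sum_congr rfl fun i _ => h1 i, Finset.sum_add_distrib]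
  have h2 : ∑ i ∈ range (M + 1), -((-1 : ℤ) ^ i * (M.choose (i + 1) : ℤ) * B (i + 1))
      + (-1 : ℤ) ^ 0 * ((M + 1).choose 0 : ℤ) * B 0
      = ∑ j ∈ range (M + 1), (-1 : ℤ) ^ j * (M.choose j : ℤ) * B j := by
    have h3 : ∑ j ∈ range (M + 1 + 1), (-1 : ℤ) ^ j * (M.choose j : ℤ) * B j
        = ∑ j ∈ range (M + 1), (-1 : ℤ) ^ j * (M.choose j : ℤ) * B j := by
      rw [Finset.sum_range_succ, Nat.choose_succ_self]
      simp
    rw [show ((-1 : ℤ) ^ 0 * ((M + 1).choose 0 : ℤ) * B 0)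
        = (-1 : ℤ) ^ 0 * ((M : ℕ).choose 0 : ℤ) * B 0 by simp]
    rw [Finset.sum_congr rfl fun i (_ : i ∈ range (M + 1)) =>
      (show -((-1 : ℤ) ^ i * (M.choose (i + 1) : ℤ) * B (i + 1))
        = (-1 : ℤ) ^ (i + 1) * (M.choose (i + 1) : ℤ) * B (i + 1) by ring)]
    exact (Finset.sum_range_succ'
      (fun j => (-1 : ℤ) ^ j * (M.choose j : ℤ) * B j) (M + 1)).symm.trans h3
  rw [add_assoc, add_comm (∑ i ∈ range (M + 1), -((-1 : ℤ) ^ i * (M.choose i : ℤ) * B (i + 1))),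
    ← add_assoc, h2, ← Finset.sum_add_distrib]
  apply Finset.sum_congr rfl
  intro i _
  ring

/-- The recursion step. -/
lemma fvb_step (a M K N : ℕ) (h : a * (M + 1) ≤ N) :
    ∑ j ∈ range (M + 1 + 1), (-1 : ℤ) ^ j * ((M + 1).choose j : ℤ) *
        ((N - a * j + (K + 1)).choose (K + 1) : ℤ)
      = ∑ r ∈ range a, ∑ j ∈ range (M + 1), (-1 : ℤ) ^ j * (M.choose j : ℤ) *
          ((N - r - a * j + K).choose K : ℤ) := by
  have key : ∀ j, j ≤ M →
      ((N - a * j + (K + 1)).choose (K + 1) : ℤ)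
          - ((N - a * (j + 1) + (K + 1)).choose (K + 1) : ℤ)
        = ∑ r ∈ range a, ((N - r - a * j + K).choose K : ℤ) := by
    intro j hj
    have hmul : a * (j + 1) ≤ N := le_trans (Nat.mul_le_mul_left a (by omega)) h
    have hmul2 : a * (j + 1) = a * j + a := by ring
    set Q := N - a * (j + 1) with hQ
    have e1 : N - a * j + (K + 1) = Q + a + K + 1 := by omega
    have e2 : N - a * (j + 1) + (K + 1) = Q + K + 1 := by omega
    have e3 : ∀ r ∈ range a, N - r - a * j + K = Q + (a - 1 - r) + 1 + K := by
      intro r hr; rw [mem_range] at hr; omega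
    rw [e1, e2, Finset.sum_congr rfl (fun r hr => by rw [e3 r hr]),
      Finset.sum_range_reflect (fun r => ((Q + r + 1 + K).choose K : ℤ)) a,
      fvb_hockey K Q a]
    push_cast
    ring
  rw [fvb_alt_pascal M (fun j => ((N - a * j + (K + 1)).choose (K + 1) : ℤ)),
    Finset.sum_comm]
  apply Finset.sum_congr rfl
  intro j hj
  rw [mem_range] at hj
  rw [← Finset.mul_sum, key j (by omega)]

/-- Main nonnegativity lemma. -/
lemma fvb_key (a : ℕ) : ∀ M K N : ℕ, M ≤ K → a * M + 1 ≤ N →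
    0 ≤ ∑ j ∈ range (M + 1),
        (-1 : ℤ) ^ j * (M.choose j : ℤ) * ((N - a * j + K).choose K : ℤ) := by
  intro M
  induction M with
  | zero =>
    intro K N _ _
    rw [Finset.sum_range_one]
    simp only [pow_zero, Nat.choose_self, Nat.cast_one, one_mul, Nat.mul_zero, Nat.sub_zero,
      Nat.choose_zero_right]
    positivity
  | succ M ih =>
    intro K N hMK hN
    obtain ⟨K', rfl⟩ : ∃ K', K = K' + 1 := ⟨K - 1, by omega⟩
    rw [fvb_step a M K' N (by omega)]
    apply Finset.sum_nonneg
    intro r hr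
    rw [Finset.mem_range] at hr
    have e : a * (M + 1) = a * M + a := by ring
    exact ih K' (N - r) (by omega) (by omega)

/-- Nonnegativity of the alternating binomial sum appearing in the bound on the
`f`-vector of a tropical variety. -/
theorem f_vector_bound_nonneg (n s d j : ℕ) (hn : 2 ≤ n) (hs : 1 ≤ s) (hd : 1 ≤ d)
    (hj : j ≤ n - 1) :
    0 ≤ ∑ i ∈ Finset.Icc 1 (n - j),
        (-1 : ℤ) ^ (n + i - j) * ((n - j - 1).choose (i - 1)) *
          ((s * d * i + n - 1).choose (n - 1)) := by
  set a := s * d with ha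
  have ha1 : 1 ≤ a := Nat.one_le_iff_ne_zero.mpr (by positivity)
  set m := n - j with hm
  have hm1 : 1 ≤ m := by omega
  have hmul : a * m = a * (m - 1) + a := by
    rw [← Nat.mul_succ]
    congr 1
    omega
  have key := fvb_key a (m - 1) (n - 1) (a * m) (by omega) (by omega)
  rw [show m - 1 + 1 = m by omega] at key
  have heq : ∑ i ∈ Finset.Icc 1 m,
        (-1 : ℤ) ^ (n + i - j) * ((n - j - 1).choose (i - 1) : ℤ) *
          ((a * i + n - 1).choose (n - 1) : ℤ)
      = ∑ k ∈ range m,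
        (-1 : ℤ) ^ k * ((m - 1).choose k : ℤ) * ((a * m - a * k + (n - 1)).choose (n - 1) : ℤ) := by
    apply Finset.sum_nbij' (i := fun x => m - x) (j := fun k => m - k)
    · intro x hx
      rw [Finset.mem_Icc] at hx
      rw [Finset.mem_range]
      omega
    · intro k hk
      rw [Finset.mem_range] at hk
      rw [Finset.mem_Icc]
      omega
    · intro x hx
      rw [Finset.mem_Icc] at hx
      omega
    · intro k hk
      rw [Finset.mem_range] at hk
      omega
    · intro x hx
      rw [Finset.mem_Icc] at hx
      have hx1 : 1 ≤ x := hx.1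
      have hx2 : x ≤ m := hx.2
      have hmx : a * (m - x) + a * x = a * m := by
        rw [← Nat.mul_add]
        congr 1
        omega
      have e1 : (-1 : ℤ) ^ (n + x - j) = (-1 : ℤ) ^ (m - x) := by
        rcases Nat.even_or_odd (m - x) with he | ho
        · rw [he.neg_one_pow]
          apply Even.neg_one_pow
          rw [Nat.even_iff] at he ⊢
          omega
        · rw [ho.neg_one_pow]
          apply Odd.neg_one_pow
          rw [Nat.odd_iff] at ho ⊢
          omega
      have e2 : (n - j - 1).choose (x - 1) = (m - 1).choose (m - x) := by
        rw [show m - x = (m - 1) - (x - 1) by omega, Nat.choose_symm (by omega), hm]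
      have e3 : a * x + n - 1 = a * m - a * (m - x) + (n - 1) := by omega
      rw [e1, e2, e3]
  rw [heq]
  exact key
end
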